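/- Let A = ℂQ/⟨R⟩ be a connected acyclic bound quiver algebra, W a faithful A-module, and V an A-module with minimal projective resolution ⋯ → P_2 →^g P_1 →^f P_0 → V → 0. If the induced linear map Hom_A(P_0, W) → Hom_A(P_1, W), φ ↦ φ∘f, is an isomorphism of vector spaces, then the projective dimension of V over A is at most 1. -/

import Mathlib

open Matrix
noncomputable section

/-- A (finite-vertex) quiver: vertices, arrows, tail and head maps. -/
structure Quiv where
  V : Type
  A : Type
  t : A → V
  h : A → V
  [fV : Fintype V]
  [dV : DecidableEq V]

attribute [instance] Quiv.fV Quiv.dV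

/-- The `Quiver` structure on the vertices of `Q`: an arrow from `x` to `y` is an
arrow of `Q` with tail `x` and head `y`.  This gives us `Quiver.Path x y`, the type of
oriented paths from `x` to `y` in `Q`. -/
instance quivToQuiver (Q : Quiv) : Quiver Q.V := ⟨fun x y => {a : Q.A // Q.t a = x ∧ Q.h a = y}⟩

/-- The space of matrix representations of `Q` of dimension vector `β`, with entries in a
commutative ring `R`. -/
def RepR (Q : Quiv) (R : Type) (β : Q.V → ℕ) := ∀ a : Q.A, Matrix (Fin (β (Q.h a))) (Fin (β (Q.t a))) R

/-- The representation space `rep(Q,β) = ∏_{a ∈ Q₁} ℂ^{β(ha) × β(ta)}`. -/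
abbrev QRep (Q : Quiv) (β : Q.V → ℕ) := RepR Q ℂ β

/-- Transport of a rectangular matrix along equalities of its sizes. -/
def castM {R : Type} {m n m' n' : ℕ} (hm : m = m') (hn : n = n')
    (M : Matrix (Fin m) (Fin n) R) : Matrix (Fin m') (Fin n') R :=
  M.submatrix (Fin.cast hm.symm) (Fin.cast hn.symm)

/-- The value `W(p)` of a representation `W` on an oriented path `p` (the product of the
matrices attached to the arrows of `p`; the trivial path gives the identity matrix). -/
def evalPath {Q : Quiv} {R : Type} [CommRing R] {β : Q.V → ℕ} (W : RepR Q R β) :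
    ∀ {x y : Q.V}, Quiver.Path x y → Matrix (Fin (β y)) (Fin (β x)) R
  | _, _, Quiver.Path.nil => 1
  | _, _, Quiver.Path.cons p e =>
      (castM (congrArg β e.2.2) (congrArg β e.2.1) (W e.1)) * evalPath W p
variable (Q : Quiv)

/-- A formal (finite) linear combination of parallel oriented paths in `Q`, together with its
endpoints: the element of the path algebra it represents lives in `e_y · ℂQ · e_x`. -/
def FormalRel := Σ (x : Q.V) (y : Q.V), (Quiver.Path x y →₀ ℂ)

variable {Q}

/-- Evaluation of a representation on a formal linear combination of parallel paths. -/
def evalLin {β : Q.V → ℕ} (W : QRep Q β) {x y : Q.V} (c : Quiver.Path x y →₀ ℂ) :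
    Matrix (Fin (β y)) (Fin (β x)) ℂ :=
  c.sum fun p k => k • evalPath W p

/-- Evaluation of a representation over `ℂ[x]` on a formal linear combination of paths. -/
def evalLinP {β : Q.V → ℕ} (W : RepR Q (Polynomial ℂ) β) {x y : Q.V}
    (c : Quiver.Path x y →₀ ℂ) : Matrix (Fin (β y)) (Fin (β x)) (Polynomial ℂ) :=
  c.sum fun p k => (Polynomial.C k) • evalPath W p

/-- The module variety `mod(A,β)` of the algebra `A = ℂQ/⟨S⟩`: all `β`-dimensional
representations of `Q` annihilating every relation in `S`. -/
def modSet (S : Set (FormalRel Q)) (β : Q.V → ℕ) : Set (QRep Q β) :=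
  {W | ∀ r ∈ S, evalLin W r.2.2 = 0}

/-- A set of relations is admissible if every path occurring in it has length at least two. -/
def AdmissibleRels (S : Set (FormalRel Q)) : Prop :=
  ∀ r ∈ S, ∀ p ∈ r.2.2.support, 2 ≤ p.length

/-- The base change group `GL(β) = ∏_x GL(β(x),ℂ)`. -/
abbrev GLb (β : Q.V → ℕ) := ∀ x : Q.V, Matrix.GeneralLinearGroup (Fin (β x)) ℂ

/-- The action of `GL(β)` on `rep(Q,β)` by simultaneous conjugation. -/
def gAct {β : Q.V → ℕ} (g : GLb β) (W : QRep Q β) : QRep Q β :=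
  fun a => ((g (Q.h a)).val) * W a * (((g (Q.t a))⁻¹).val)

/-- The character of `GL(β)` induced by the weight `σ`: `g ↦ ∏_x det(g(x))^{σ(x)}`.  -/
def chi {β : Q.V → ℕ} (σ : Q.V → ℤ) (g : GLb β) : ℂ :=
  ∏ x : Q.V, ((g x).val.det) ^ (σ x)

/-- Index type of the coordinates on `rep(Q,β)`. -/
def RepCoord (β : Q.V → ℕ) := Σ a : Q.A, Fin (β (Q.h a)) × Fin (β (Q.t a))

/-- The coordinates of a point of `rep(Q,β)`. -/
def repCoords {β : Q.V → ℕ} (W : QRep Q β) : RepCoord (Q := Q) β → ℂ :=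
  fun c => W c.1 c.2.1 c.2.2

/-- `F` is a polynomial function on `rep(Q,β)`. -/
def IsPolyFun {β : Q.V → ℕ} (F : QRep Q β → ℂ) : Prop :=
  ∃ P : MvPolynomial (RepCoord (Q := Q) β) ℂ, ∀ W, F W = MvPolynomial.eval (repCoords W) P

/-- `F` is a semi-invariant of weight `σ` on `rep(Q,β)`. -/
def IsSemiInvariant {β : Q.V → ℕ} (σ : Q.V → ℤ) (F : QRep Q β → ℂ) : Prop :=
  IsPolyFun F ∧ ∀ (g : GLb β) (W : QRep Q β), F (gAct g W) = chi σ g * F W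

/-- The orbit semigroup `S_Q(W)` of a representation `W ∈ rep(Q,β)`: all weights `σ` admitting
a semi-invariant of weight `σ` not vanishing at `W`. -/
def OrbitSemigroup {β : Q.V → ℕ} (W : QRep Q β) : Set (Q.V → ℤ) :=
  {σ | ∃ F : QRep Q β → ℂ, IsSemiInvariant σ F ∧ F W ≠ 0}

/-- `W` is `σ`-semi-stable: some positive multiple of `σ` lies in the orbit semigroup. -/
def SemiStable {β : Q.V → ℕ} (σ : Q.V → ℤ) (W : QRep Q β) : Prop :=
  ∃ n : ℕ, 1 ≤ n ∧ (fun x => (n : ℤ) * σ x) ∈ OrbitSemigroup W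

/-- The weight `σ` is `W`-saturated: if `nσ` lies in the orbit semigroup of `W` for some
integer `n ≥ 1`, then so does `σ`. -/
def WSaturated {β : Q.V → ℕ} (W : QRep Q β) (σ : Q.V → ℤ) : Prop :=
  (∃ n : ℕ, 1 ≤ n ∧ (fun x => (n : ℤ) * σ x) ∈ OrbitSemigroup W) → σ ∈ OrbitSemigroup W

/-- `Q` is connected: any two vertices are joined by an unoriented walk. -/
def QConnected (Q : Quiv) : Prop :=
  ∀ x y : Q.V, Relation.ReflTransGen
    (fun u v => ∃ a : Q.A, (Q.t a = u ∧ Q.h a = v) ∨ (Q.t a = v ∧ Q.h a = u)) x y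

/-- `Q` is acyclic: the only oriented path from a vertex to itself is the trivial one. -/
def QAcyclic (Q : Quiv) : Prop := ∀ (x : Q.V) (p : Quiver.Path x x), p = Quiver.Path.nil
section Capacity

variable (Q : Quiv) (β : Q.V → ℕ) (σ : Q.V → ℤ)

/-- Vertices where the weight `σ` is positive. -/
abbrev PosV := {x : Q.V // 0 < σ x}

/-- Vertices where the weight `σ` is negative. -/
abbrev NegV := {x : Q.V // σ x < 0}

/-- `σ₊` at a positive vertex. -/
abbrev posP (i : PosV Q σ) : ℕ := (σ i.1).toNat

/-- `σ₋` at a negative vertex. -/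
abbrev negP (j : NegV Q σ) : ℕ := (-σ j.1).toNat

/-- Row index type of the `N × N` block matrices: block rows are indexed by pairs `(j,q)`
with `q ∈ I_j⁻`, each of height `β(w_j)`; so `N = Σ_j σ₋(w_j)β(w_j)` rows in total. -/
abbrev RowT := Σ j : NegV Q σ, Fin (negP Q σ j) × Fin (β j.1)

/-- Column index type of the `N × N` block matrices: block columns indexed by pairs `(i,r)`
with `r ∈ I_i⁺`, each of width `β(v_i)`; so `N = Σ_i σ₊(v_i)β(v_i)` columns in total. -/
abbrev ColT := Σ i : PosV Q σ, Fin (posP Q σ i) × Fin (β i.1)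

/-- The index set `I_σ = {(i,j,p,q,r)}`. -/
structure BIdx where
  i : PosV Q σ
  j : NegV Q σ
  p : Quiver.Path i.1 j.1
  q : Fin (negP Q σ j)
  r : Fin (posP Q σ i)

variable {Q β σ}

/-- The block matrix `W^{i,j,p}_{q,r}`: its `(q,r)` block entry is `W(p)` and all other
entries vanish. -/
def blockMat (W : QRep Q β) (d : BIdx Q σ) : Matrix (RowT Q β σ) (ColT Q β σ) ℂ :=
  fun s u =>
    if hj : s.1 = d.j then
      if hi : u.1 = d.i then
        if Fin.cast (congrArg (negP Q σ) hj) s.2.1 = d.q ∧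
           Fin.cast (congrArg (posP Q σ) hi) u.2.1 = d.r then
          evalPath W d.p (Fin.cast (congrArg (fun z => β z.1) hj) s.2.2)
            (Fin.cast (congrArg (fun z => β z.1) hi) u.2.2)
        else 0
      else 0
    else 0

/-- The Brascamp–Lieb (completely positive) operator `T_{W,σ}` associated to the quiver
datum `(W,σ)`, with Kraus operators the block matrices `W^{i,j,p}_{q,r}`. -/
def BLop (W : QRep Q β) (X : Matrix (RowT Q β σ) (RowT Q β σ) ℂ) :
    Matrix (ColT Q β σ) (ColT Q β σ) ℂ :=
  ∑ᶠ d : BIdx Q σ, (blockMat W d)ᵀ * X * blockMat W d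

/-- The capacity `cap_Q(W,σ)` of the quiver datum `(W,σ)`: the infimum of
`Det (T_{W,σ}(X))` over real positive definite matrices `X` with `Det X = 1`. -/
def capQ (W : QRep Q β) : ℝ :=
  sInf {r : ℝ | ∃ X : Matrix (RowT Q β σ) (RowT Q β σ) ℝ, X.PosDef ∧ X.det = 1 ∧
    r = ((BLop (σ := σ) W (X.map Complex.ofReal)).det).re}

/-- `Span_ℂ(W^{i,j,p}_{q,r} : (i,j,p,q,r) ∈ I_σ)` contains a non-singular `N × N` matrix. -/
def SpanNonsingular (W : QRep Q β) (σ : Q.V → ℤ) : Prop :=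
  ∃ M ∈ Submodule.span ℂ (Set.range (blockMat (σ := σ) W)),
    Function.Bijective (Matrix.mulVecLin M)

end Capacity
section HomExt

variable {Q : Quiv}

/-- The space of morphisms of representations `Hom(V,W)`, as a subspace of
`∏_x Hom(V(x),W(x))` (in matrix form). -/
def HomS {α γ : Q.V → ℕ} (V : QRep Q α) (W : QRep Q γ) :
    Submodule ℂ (∀ x : Q.V, Matrix (Fin (γ x)) (Fin (α x)) ℂ) where
  carrier := {φ | ∀ a : Q.A, φ (Q.h a) * V a = W a * φ (Q.t a)}
  add_mem' := by
    intro φ ψ hφ hψ a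
    simp only [Pi.add_apply, Matrix.add_mul, Matrix.mul_add, hφ a, hψ a]
  zero_mem' := by intro a; simp
  smul_mem' := by
    intro c φ hφ a
    simp only [Pi.smul_apply, Matrix.smul_mul, Matrix.mul_smul, hφ a]

/-- `dim_ℂ Hom(V,W)`. -/
def dimHom {α γ : Q.V → ℕ} (V : QRep Q α) (W : QRep Q γ) : ℕ :=
  Module.finrank ℂ (HomS V W)

/-- A family of matrices is componentwise surjective (as linear maps). -/
def MorSurj {α γ : Q.V → ℕ} (φ : ∀ x : Q.V, Matrix (Fin (γ x)) (Fin (α x)) ℂ) : Prop :=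
  ∀ x, Function.Surjective (Matrix.mulVecLin (φ x))

/-- A family of matrices is componentwise injective (as linear maps). -/
def MorInj {α γ : Q.V → ℕ} (φ : ∀ x : Q.V, Matrix (Fin (γ x)) (Fin (α x)) ℂ) : Prop :=
  ∀ x, Function.Injective (Matrix.mulVecLin (φ x))

/-- Isomorphism of representations (possibly of different dimension vectors). -/
def RIso {α γ : Q.V → ℕ} (V : QRep Q α) (W : QRep Q γ) : Prop :=
  ∃ u : ∀ x : Q.V, ((Fin (α x) → ℂ) ≃ₗ[ℂ] (Fin (γ x) → ℂ)),
    ∀ a : Q.A, (u (Q.h a)).toLinearMap ∘ₗ (V a).mulVecLin =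
      (W a).mulVecLin ∘ₗ (u (Q.t a)).toLinearMap

/-- The space of `1`-cochains from `V` to `W`: families `φ(a) : V(ta) → W(ha)`. -/
abbrev C1sp (α γ : Q.V → ℕ) := ∀ a : Q.A, Matrix (Fin (γ (Q.h a))) (Fin (α (Q.t a))) ℂ

/-- The derivative (Leibniz rule) of a path with respect to a `1`-cochain `φ`:
`D_{a_s ⋯ a_1}(φ) = Σ_k W(a_s ⋯ a_{k+1}) φ(a_k) V(a_{k-1} ⋯ a_1)`. -/
def der {α γ : Q.V → ℕ} (V : QRep Q α) (W : QRep Q γ) (φ : C1sp (Q := Q) α γ) :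
    ∀ {x y : Q.V}, Quiver.Path x y → Matrix (Fin (γ y)) (Fin (α x)) ℂ
  | _, _, Quiver.Path.nil => 0
  | _, _, Quiver.Path.cons p e =>
      castM (congrArg γ e.2.2) (congrArg α e.2.1) (φ e.1) * evalPath V p
      + castM (congrArg γ e.2.2) (congrArg γ e.2.1) (W e.1) * der V W φ p

lemma der_add {α γ : Q.V → ℕ} (V : QRep Q α) (W : QRep Q γ) (φ ψ : C1sp (Q := Q) α γ)
    {x y : Q.V} (p : Quiver.Path x y) :
    der V W (φ + ψ) p = der V W φ p + der V W ψ p := by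
  induction p with
  | nil => simp [der]
  | cons p e ih =>
      simp only [der, ih, Pi.add_apply, castM, Matrix.submatrix_add, Matrix.add_mul,
        Matrix.mul_add]
      abel

lemma der_smul {α γ : Q.V → ℕ} (V : QRep Q α) (W : QRep Q γ) (c : ℂ) (φ : C1sp (Q := Q) α γ)
    {x y : Q.V} (p : Quiver.Path x y) :
    der V W (c • φ) p = c • der V W φ p := by
  induction p with
  | nil => simp [der]
  | cons p e ih =>
      simp only [der, ih, Pi.smul_apply, castM, Matrix.submatrix_smul, Matrix.smul_mul,
        Matrix.mul_smul, smul_add]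

lemma der_zero {α γ : Q.V → ℕ} (V : QRep Q α) (W : QRep Q γ)
    {x y : Q.V} (p : Quiver.Path x y) :
    der V W (0 : C1sp (Q := Q) α γ) p = 0 := by
  induction p with
  | nil => simp [der]
  | cons p e ih =>
      simp [der, ih, castM]

/-- The derivative of a formal linear combination of parallel paths. -/
def derRel {α γ : Q.V → ℕ} (V : QRep Q α) (W : QRep Q γ) (φ : C1sp (Q := Q) α γ)
    {x y : Q.V} (c : Quiver.Path x y →₀ ℂ) : Matrix (Fin (γ y)) (Fin (α x)) ℂ :=
  c.sum fun p k => k • der V W φ p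

/-- The space of `1`-cocycles relative to the set of relations `S`: cochains whose
derivative kills every relation in `S`. -/
def Z1 (S : Set (FormalRel Q)) {α γ : Q.V → ℕ} (V : QRep Q α) (W : QRep Q γ) :
    Submodule ℂ (C1sp (Q := Q) α γ) where
  carrier := {φ | ∀ r ∈ S, derRel V W φ r.2.2 = 0}
  add_mem' := by
    intro φ ψ hφ hψ r hr
    have : derRel V W (φ + ψ) r.2.2 = derRel V W φ r.2.2 + derRel V W ψ r.2.2 := by
      simp only [derRel, der_add, smul_add]
      exact Finsupp.sum_add
    rw [this, hφ r hr, hψ r hr, add_zero]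
  zero_mem' := by
    intro r hr
    simp [derRel, der_zero]
  smul_mem' := by
    intro c φ hφ r hr
    have : derRel V W (c • φ) r.2.2 = c • derRel V W φ r.2.2 := by
      simp only [derRel, der_smul, Finsupp.smul_sum, smul_comm c]
    rw [this, hφ r hr, smul_zero]

/-- The coboundary map `d⁰ : ∏_x Hom(V(x),W(x)) → C¹`,
`f ↦ (a ↦ f(ha) V(a) − W(a) f(ta))`. -/
def d0map {α γ : Q.V → ℕ} (V : QRep Q α) (W : QRep Q γ) :
    (∀ x : Q.V, Matrix (Fin (γ x)) (Fin (α x)) ℂ) →ₗ[ℂ] C1sp (Q := Q) α γ where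
  toFun f := fun a => f (Q.h a) * V a - W a * f (Q.t a)
  map_add' f g := by
    funext a
    simp only [Pi.add_apply, Matrix.add_mul, Matrix.mul_add]
    abel
  map_smul' c f := by
    funext a
    simp only [Pi.smul_apply, Matrix.smul_mul, Matrix.mul_smul, smul_sub, RingHom.id_apply]

/-- The space of `1`-coboundaries. -/
def B1 {α γ : Q.V → ℕ} (V : QRep Q α) (W : QRep Q γ) : Submodule ℂ (C1sp (Q := Q) α γ) :=
  LinearMap.range (d0map V W)

/-- `dim_ℂ Ext¹(V,W)` over the algebra `ℂQ/⟨S⟩`, computed as the dimension of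
`Z¹/B¹` (for modules, `B¹ ⊆ Z¹`, so this is `dim Z¹ − dim B¹`). -/
def dimExt1 (S : Set (FormalRel Q)) {α γ : Q.V → ℕ} (V : QRep Q α) (W : QRep Q γ) : ℕ :=
  Module.finrank ℂ (Z1 S V W) - Module.finrank ℂ ↥((B1 V W) ⊓ (Z1 S V W))

end HomExt
section ProjPdim

variable {Q : Quiv}

/-- `P` is a projective module over `ℂQ/⟨S⟩` (in matrix-representation form):
every morphism from `P` to the target of a surjection of modules lifts. -/
def IsProjRep (S : Set (FormalRel Q)) {γ : Q.V → ℕ} (P : QRep Q γ) : Prop :=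
  ∀ (δ ε : Q.V → ℕ) (M : QRep Q δ) (N : QRep Q ε), M ∈ modSet S δ → N ∈ modSet S ε →
    ∀ g ∈ HomS M N, MorSurj g → ∀ f ∈ HomS P N,
      ∃ h ∈ HomS P M, ∀ x, g x * h x = f x

/-- `V` has projective dimension at most one over `ℂQ/⟨S⟩`: there is a short exact
sequence `0 → P₁ → P₀ → V → 0` with `P₀, P₁` projective. -/
def PdimLE1 (S : Set (FormalRel Q)) {β : Q.V → ℕ} (V : QRep Q β) : Prop :=
  ∃ (γ₀ γ₁ : Q.V → ℕ) (P₀ : QRep Q γ₀) (P₁ : QRep Q γ₁),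
    P₀ ∈ modSet S γ₀ ∧ P₁ ∈ modSet S γ₁ ∧ IsProjRep S P₀ ∧ IsProjRep S P₁ ∧
    ∃ i ∈ HomS P₁ P₀, ∃ p ∈ HomS P₀ V, MorInj i ∧ MorSurj p ∧
      ∀ x, LinearMap.range (Matrix.mulVecLin (i x)) = LinearMap.ker (Matrix.mulVecLin (p x))

/-- The set `P_A(α) = {V ∈ mod(A,α) : pdim_A V ≤ 1}` where `A = ℂQ/⟨S⟩`. -/
def PAset (S : Set (FormalRel Q)) (α : Q.V → ℕ) : Set (QRep Q α) :=
  {V | V ∈ modSet S α ∧ PdimLE1 S V}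

end ProjPdim

section Zariski

/-- The Zariski topology on the affine space `ι → ℂ`: generated by the complements of
hypersurfaces. -/
def zarPi (ι : Type) : TopologicalSpace (ι → ℂ) :=
  TopologicalSpace.generateFrom
    {U | ∃ p : MvPolynomial ι ℂ, U = {w | MvPolynomial.eval w p ≠ 0}}

variable {Q : Quiv}

/-- The Zariski topology on `rep(Q,β)`. -/
def zarTop (β : Q.V → ℕ) : TopologicalSpace (QRep Q β) :=
  TopologicalSpace.induced (repCoords (β := β)) (zarPi _)

/-- Zariski closure in `rep(Q,β)`. -/
def zclosure {β : Q.V → ℕ} (s : Set (QRep Q β)) : Set (QRep Q β) :=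
  @closure _ (zarTop β) s

/-- Zariski-open. -/
def zIsOpen {β : Q.V → ℕ} (s : Set (QRep Q β)) : Prop := @IsOpen _ (zarTop β) s

/-- Zariski-closed. -/
def zIsClosed {β : Q.V → ℕ} (s : Set (QRep Q β)) : Prop := @IsClosed _ (zarTop β) s

/-- Irreducibility in the Zariski topology. -/
def zIrred {β : Q.V → ℕ} (s : Set (QRep Q β)) : Prop := @IsIrreducible _ (zarTop β) s

/-- Dimension of a subset of `rep(Q,β)`: the topological Krull dimension in the
(subspace) Zariski topology. -/
def zdim {β : Q.V → ℕ} (s : Set (QRep Q β)) : WithBot ℕ∞ :=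
  @topologicalKrullDim s (TopologicalSpace.induced Subtype.val (zarTop β))

/-- `C(α)`: the closure of `P_A(α)`. -/
def Cset (S : Set (FormalRel Q)) (α : Q.V → ℕ) : Set (QRep Q α) := zclosure (PAset S α)

/-- `C` is an irreducible component of `M` (for `M` closed in `rep(Q,α)`): a maximal
irreducible closed subset of `M`. -/
def IsIrrCompOf {β : Q.V → ℕ} (C M : Set (QRep Q β)) : Prop :=
  zIrred C ∧ zIsClosed C ∧ C ⊆ M ∧
    ∀ C' : Set (QRep Q β), zIrred C' → zIsClosed C' → C' ⊆ M → C ⊆ C' → C' = C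

/-- `V` is an indecomposable representation: it is nonzero and its endomorphism algebra
has no idempotents other than `0` and `1`. -/
def IsIndecRep {α : Q.V → ℕ} (V : QRep Q α) : Prop :=
  (∃ x, α x ≠ 0) ∧
  ∀ φ ∈ HomS V V, (∀ x, φ x * φ x = φ x) → φ = 0 ∨ φ = fun x => (1 : Matrix _ _ ℂ)

/-- `C` is an indecomposable irreducible component of `M`: an irreducible component
containing a dense open subset of indecomposable representations. -/
def IsIndecComp {β : Q.V → ℕ} (C M : Set (QRep Q β)) : Prop :=
  IsIrrCompOf C M ∧
  ∃ U : Set (QRep Q β), zIsOpen U ∧ C ⊆ zclosure (C ∩ U) ∧ ∀ V ∈ C ∩ U, IsIndecRep V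

/-- The `GL(α)`-orbit of `V`. -/
def orbitOf {α : Q.V → ℕ} (V : QRep Q α) : Set (QRep Q α) := {W | ∃ g : GLb α, gAct g V = W}

/-- `C` is an orbit closure `closure(GL(α)·V)` of some module `V ∈ mod(A,α)`. -/
def IsOrbitClosure (S : Set (FormalRel Q)) {α : Q.V → ℕ} (C : Set (QRep Q α)) : Prop :=
  ∃ V ∈ modSet S α, C = zclosure (orbitOf V)

/-- The coordinates on `∏_x ℂ^{α(x) × α(x)}`, the ambient space of `GL(α)`. -/
def glCoords {α : Q.V → ℕ} (g : ∀ x : Q.V, Matrix (Fin (α x)) (Fin (α x)) ℂ) :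
    (Σ x : Q.V, Fin (α x) × Fin (α x)) → ℂ := fun c => g c.1 c.2.1 c.2.2

/-- The Zariski topology on `∏_x ℂ^{α(x) × α(x)}`. -/
def glTop (Q : Quiv) (α : Q.V → ℕ) :
    TopologicalSpace (∀ x : Q.V, Matrix (Fin (α x)) (Fin (α x)) ℂ) :=
  TopologicalSpace.induced glCoords (zarPi _)

/-- `GL(α)` as a (quasi-affine) subset of `∏_x ℂ^{α(x) × α(x)}`. -/
def glSet (Q : Quiv) (α : Q.V → ℕ) : Set (∀ x : Q.V, Matrix (Fin (α x)) (Fin (α x)) ℂ) :=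
  {g | ∀ x, IsUnit (g x)}

/-- The dimension of the group variety `GL(α)`. -/
def glDim (Q : Quiv) (α : Q.V → ℕ) : WithBot ℕ∞ :=
  @topologicalKrullDim (glSet Q α) (TopologicalSpace.induced Subtype.val (glTop Q α))

end Zariski
section Sums

variable {Q : Quiv}

/-- `W` is a direct sum of the representations `V i` (up to isomorphism of the underlying
block-diagonal structure). -/
def IsSumOf {ι : Type} [Fintype ι] [DecidableEq ι] {αs : ι → Q.V → ℕ} {δ : Q.V → ℕ}
    (W : QRep Q δ) (V : ∀ i, QRep Q (αs i)) : Prop :=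
  ∃ u : ∀ x : Q.V, ((Fin (δ x) → ℂ) ≃ₗ[ℂ] ((Σ i, Fin (αs i x)) → ℂ)),
    ∀ a : Q.A, (u (Q.h a)).toLinearMap ∘ₗ (W a).mulVecLin =
      (Matrix.blockDiagonal' (fun i => V i a)).mulVecLin ∘ₗ (u (Q.t a)).toLinearMap

/-- The constructible subset `C₁ ⊕ ⋯ ⊕ C_l ⊆ rep(Q,δ)`: representations isomorphic to a
direct sum `V₁ ⊕ ⋯ ⊕ V_l` with `V_i ∈ C_i`. -/
def sumSet {ι : Type} [Fintype ι] [DecidableEq ι] (αs : ι → Q.V → ℕ)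
    (Cs : ∀ i, Set (QRep Q (αs i))) (δ : Q.V → ℕ) : Set (QRep Q δ) :=
  {W | ∃ V : ∀ i, QRep Q (αs i), (∀ i, V i ∈ Cs i) ∧ IsSumOf W V}

/-- The generic `Ext¹` between two subsets:
`ext¹(C,D) = min {dim Ext¹(X,Y) : (X,Y) ∈ C × D}`. -/
def genExt1 (S : Set (FormalRel Q)) {α α' : Q.V → ℕ}
    (C : Set (QRep Q α)) (D : Set (QRep Q α')) : ℕ :=
  sInf {n : ℕ | ∃ X ∈ C, ∃ Y ∈ D, n = dimExt1 S X Y}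

end Sums

section ExtHigher

variable {Q : Quiv}

/-- A representation of `Q` packaged with its dimension vector. -/
def PRp (Q : Quiv) := Σ γ : Q.V → ℕ, QRep Q γ

instance : Inhabited (PRp Q) := ⟨⟨fun _ => 0, fun _ => 0⟩⟩

/-- `K` is a (first) syzygy of `M` over `ℂQ/⟨S⟩`: there is a short exact sequence
`0 → K → P → M → 0` with `P` a projective module. -/
def IsSyzOf (S : Set (FormalRel Q)) (K M : PRp Q) : Prop :=
  K.2 ∈ modSet S K.1 ∧ ∃ (γP : Q.V → ℕ) (P : QRep Q γP), P ∈ modSet S γP ∧ IsProjRep S P ∧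
    ∃ i ∈ HomS K.2 P, ∃ p ∈ HomS P M.2, MorInj i ∧ MorSurj p ∧
      ∀ x, LinearMap.range (Matrix.mulVecLin (i x)) = LinearMap.ker (Matrix.mulVecLin (p x))

/-- A chosen syzygy of `M` over `ℂQ/⟨S⟩`. -/
def syz (S : Set (FormalRel Q)) (M : PRp Q) : PRp Q :=
  Classical.epsilon (fun K => IsSyzOf S K M)

/-- `dim_ℂ Ext^l (M,N)` over `ℂQ/⟨S⟩`, via dimension shifting along syzygies:
`Ext⁰ = Hom`, `Ext¹` is computed by cochains, and `Ext^{l+2}(M,N) = Ext^{l+1}(ΩM,N)`. -/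
def dimExtN (S : Set (FormalRel Q)) : ℕ → PRp Q → PRp Q → ℕ
  | 0, M, N => dimHom M.2 N.2
  | 1, M, N => dimExt1 S M.2 N.2
  | (l+2), M, N => dimExtN S (l+1) (syz S M) N

/-- The simple representation `S_x` concentrated at the vertex `x`. -/
def simplePR (Q : Quiv) (x0 : Q.V) : PRp Q :=
  ⟨fun z => if z = x0 then 1 else 0, fun _ => 0⟩

/-- The Euler form pairing `⟨α, dim S_y⟩_B` of the algebra `B = ℂQ/⟨S⟩`:
`Σ_{l ≥ 0} (−1)^l Σ_x dim Ext^l_B(S_x,S_y) · α(x)`.  The weight `⟨α,−⟩_B` is the function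
`y ↦ eulerPair S α y`. -/
def eulerPair (S : Set (FormalRel Q)) (α : Q.V → ℕ) (y : Q.V) : ℤ :=
  ∑ᶠ l : ℕ, (-1 : ℤ)^l *
    ∑ x : Q.V, (α x : ℤ) * (dimExtN S l (simplePR Q x) (simplePR Q y) : ℤ)

/-- The set of relations annihilating `W`: the annihilator `Ann_{ℂQ}(W)`, so that
`B = ℂQ/Ann_{ℂQ}(W)`. -/
def annRel {β : Q.V → ℕ} (W : QRep Q β) : Set (FormalRel Q) :=
  {r | evalLin W r.2.2 = 0}

/-- The weight semigroup `L_W` of `W`: weights `σ` with `σ|_{supp β} = ⟨α,−⟩_B` for some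
dimension vector `α ∈ ℕ^{supp β}` with `P_B(α) ≠ ∅`, where `B = ℂQ/Ann_{ℂQ}(W)`. -/
def weightSgrp {β : Q.V → ℕ} (W : QRep Q β) : Set (Q.V → ℤ) :=
  {σ | ∃ α : Q.V → ℕ, (∀ x, β x = 0 → α x = 0) ∧ (PAset (annRel W) α).Nonempty ∧
    ∀ y, β y ≠ 0 → σ y = eulerPair (annRel W) α y}

end ExtHigher

section Tame

variable {Q : Quiv}

/-- Specialization of a representation over `ℂ[x]` at `λ ∈ ℂ`, i.e.
`M ⊗_{ℂ[x]} ℂ[x]/(x−λ)`. -/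
def polyEvalAt {γ : Q.V → ℕ} (M : RepR Q (Polynomial ℂ) γ) (lam : ℂ) : QRep Q γ :=
  fun a => (M a).map (fun p => Polynomial.eval lam p)

/-- The algebra `A = ℂQ/⟨S⟩` is tame: for every dimension `d` there are finitely many
`A`–`ℂ[x]`-bimodules `M₁,…,M_s`, free of finite rank over `ℂ[x]` (i.e. matrix
representations over `ℂ[x]` satisfying the relations), such that all but finitely many
isomorphism classes of `d`-dimensional indecomposable `A`-modules are of the form
`M_i ⊗_{ℂ[x]} ℂ[x]/(x−λ)`. -/
def IsTame (S : Set (FormalRel Q)) : Prop :=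
  ∀ d : ℕ, ∃ (s : ℕ) (γs : Fin s → (Q.V → ℕ)) (M : ∀ i, RepR Q (Polynomial ℂ) (γs i)),
    (∀ i, ∀ r ∈ S, evalLinP (M i) r.2.2 = 0) ∧
    ∃ (t : ℕ) (βs : Fin t → (Q.V → ℕ)) (E : ∀ k, QRep Q (βs k)),
      ∀ (α : Q.V → ℕ) (V : QRep Q α), V ∈ modSet S α → (∑ x, α x) = d → IsIndecRep V →
        (∃ k, RIso (E k) V) ∨ (∃ i lam, RIso (polyEvalAt (M i) lam) V)

end Tame

section Stability

variable {Q : Quiv}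

/-- `U` is a subrepresentation of `V` (a family of subspaces preserved by the structure
maps). -/
def SubRep {α : Q.V → ℕ} (V : QRep Q α) (U : ∀ x : Q.V, Submodule ℂ (Fin (α x) → ℂ)) : Prop :=
  ∀ a : Q.A, (U (Q.t a)).map (Matrix.mulVecLin (V a)) ≤ U (Q.h a)

/-- `V` is `θ`-stable: `V ≠ 0`, `θ · dim V = 0`, and `θ · dim V' < 0` for every proper
nonzero subrepresentation `V'` of `V`. -/
def ThetaStable {α : Q.V → ℕ} (θ : Q.V → ℤ) (V : QRep Q α) : Prop :=
  (∃ x, α x ≠ 0) ∧ (∑ x, θ x * (α x : ℤ)) = 0 ∧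
  ∀ U : ∀ x : Q.V, Submodule ℂ (Fin (α x) → ℂ), SubRep V U →
    (∃ x, U x ≠ ⊥) → (∃ x, U x ≠ ⊤) →
      (∑ x, θ x * (Module.finrank ℂ (U x) : ℤ)) < 0

/-- The morphism with components `f` from `P` is essential onto its image: any
subrepresentation of `P` mapping onto the image of `f` is all of `P`. -/
def IsEssentialTo {γ δ : Q.V → ℕ} (P : QRep Q γ)
    (f : ∀ x : Q.V, Matrix (Fin (δ x)) (Fin (γ x)) ℂ) : Prop :=
  ∀ U : ∀ x : Q.V, Submodule ℂ (Fin (γ x) → ℂ), SubRep P U →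
    (∀ x, (U x).map (Matrix.mulVecLin (f x)) = LinearMap.range (Matrix.mulVecLin (f x))) →
      ∀ x, U x = ⊤

end Stability

section Ideal

variable {Q : Quiv}

/-- The `(x,y)`-component of the two-sided ideal `⟨S⟩` of `ℂQ` generated by the
relations in `S`: the span of the translates `q·r·p` of relations `r ∈ S` by paths. -/
def idealComp (S : Set (FormalRel Q)) (x y : Q.V) : Submodule ℂ (Quiver.Path x y →₀ ℂ) :=
  Submodule.span ℂ {c | ∃ r ∈ S, ∃ (p : Quiver.Path x r.1) (q : Quiver.Path r.2.1 y),
    c = Finsupp.mapDomain (fun s => (p.comp s).comp q) r.2.2}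

/-- `W` is a faithful module over `A = ℂQ/⟨S⟩`: every element of `ℂQ` annihilating `W`
lies in the ideal `⟨S⟩`. -/
def FaithfulOver (S : Set (FormalRel Q)) {β : Q.V → ℕ} (W : QRep Q β) : Prop :=
  ∀ (x y : Q.V) (c : Quiver.Path x y →₀ ℂ), evalLin W c = 0 → c ∈ idealComp S x y

end Ideal
section Precomp

variable {Q : Quiv}

/-- Precomposition with a morphism `f : L → M` of representations, as a linear map
`Hom(M,N) → Hom(L,N)`, `φ ↦ φ ∘ f`. -/
def precompMap {γ₁ γ₀ δ : Q.V → ℕ} (L : QRep Q γ₁) (M : QRep Q γ₀) (N : QRep Q δ)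
    (f : ∀ x : Q.V, Matrix (Fin (γ₀ x)) (Fin (γ₁ x)) ℂ) (hf : f ∈ HomS L M) :
    (HomS M N) →ₗ[ℂ] (HomS L N) where
  toFun φ := ⟨fun x => φ.1 x * f x, by
    intro a
    have h1 : φ.1 (Q.h a) * M a = N a * φ.1 (Q.t a) := φ.2 a
    have h2 : f (Q.h a) * L a = M a * f (Q.t a) := hf a
    calc (φ.1 (Q.h a) * f (Q.h a)) * L a
        = φ.1 (Q.h a) * (f (Q.h a) * L a) := by rw [Matrix.mul_assoc]
      _ = φ.1 (Q.h a) * (M a * f (Q.t a)) := by rw [h2]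
      _ = (φ.1 (Q.h a) * M a) * f (Q.t a) := by rw [Matrix.mul_assoc]
      _ = (N a * φ.1 (Q.t a)) * f (Q.t a) := by rw [h1]
      _ = N a * (φ.1 (Q.t a) * f (Q.t a)) := by rw [Matrix.mul_assoc]⟩
  map_add' φ ψ := by
    apply Subtype.ext
    funext x
    simp [Matrix.add_mul]
  map_smul' c φ := by
    apply Subtype.ext
    funext x
    simp [Matrix.smul_mul]

end Precomp

section BipartiteQsig

variable (Q : Quiv) (β : Q.V → ℕ) (σ : Q.V → ℤ)

/-- The bipartite quiver `Q^σ`: its vertices are the vertices of `Q` where `σ` is positive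
together with those where `σ` is negative, and it has one arrow `a_p : v_i → w_j` for every
oriented path `p` in `Q` from `v_i` to `w_j`. -/
def Qsig : Quiv where
  V := PosV Q σ ⊕ NegV Q σ
  A := Σ (i : PosV Q σ) (j : NegV Q σ), Quiver.Path i.1 j.1
  t := fun a => Sum.inl a.1
  h := fun a => Sum.inr a.2.1
  fV := inferInstance
  dV := inferInstance

/-- The dimension vector `β` restricted to `Q^σ`. -/
def betaSig : (Qsig Q σ).V → ℕ := Sum.elim (fun i => β i.1) (fun j => β j.1)

/-- The weight `σ` restricted to `Q^σ`. -/
def sigSig : (Qsig Q σ).V → ℤ := Sum.elim (fun i => σ i.1) (fun j => σ j.1)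

/-- The morphism `φ : rep(Q,β) → rep(Q^σ,β)` given by `φ(W)(a_p) = W(p)`. -/
def phiSig (W : QRep Q β) : QRep (Qsig Q σ) (betaSig Q β σ) :=
  fun a => evalPath W a.2.2

end BipartiteQsig

section Statement8Aux

open Matrix

variable {Q : Quiv}

lemma s8_evalPath_nil {β : Q.V → ℕ} (M : QRep Q β) (x : Q.V) :
    evalPath M (Quiver.Path.nil : Quiver.Path x x) = 1 := by
  simp [evalPath]

/-- `evalPath` on a path extended by a raw arrow. -/
lemma s8_evalPath_cons {β : Q.V → ℕ} (M : QRep Q β) (a : Q.A) {x : Q.V}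
    (p : Quiver.Path x (Q.t a)) :
    evalPath M (p.cons (⟨a, rfl, rfl⟩ : Q.t a ⟶ Q.h a)) = M a * evalPath M p := by
  simp [evalPath, castM]

lemma s8_evalPath_comp {β : Q.V → ℕ} (M : QRep Q β) {x y z : Q.V}
    (p : Quiver.Path x y) (q : Quiver.Path y z) :
    evalPath M (p.comp q) = evalPath M q * evalPath M p := by
  induction q with
  | nil => rw [Quiver.Path.comp_nil, s8_evalPath_nil, Matrix.one_mul]
  | cons q e ih =>
      obtain ⟨a, rfl, rfl⟩ := e
      rw [Quiver.Path.comp_cons, s8_evalPath_cons, s8_evalPath_cons, ih, Matrix.mul_assoc]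

/-- `evalLin` as a linear map. -/
def evalLinM {β : Q.V → ℕ} (M : QRep Q β) (x y : Q.V) :
    (Quiver.Path x y →₀ ℂ) →ₗ[ℂ] Matrix (Fin (β y)) (Fin (β x)) ℂ :=
  Finsupp.lsum ℂ fun p => LinearMap.toSpanSingleton ℂ _ (evalPath M p)

lemma evalLinM_eq_sum {β : Q.V → ℕ} (M : QRep Q β) (x y : Q.V) (c : Quiver.Path x y →₀ ℂ) :
    evalLinM M x y c = c.sum fun p k => k • evalPath M p := by
  rw [evalLinM, Finsupp.lsum_apply]
  rfl

lemma evalLinM_apply {β : Q.V → ℕ} (M : QRep Q β) (x y : Q.V) (c : Quiver.Path x y →₀ ℂ) :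
    evalLinM M x y c = evalLin M c := by
  rw [evalLinM_eq_sum]; rfl

lemma evalLinM_single {β : Q.V → ℕ} (M : QRep Q β) {x y : Q.V} (p : Quiver.Path x y) (k : ℂ) :
    evalLinM M x y (Finsupp.single p k) = k • evalPath M p := by
  rw [evalLinM_eq_sum]
  exact Finsupp.sum_single_index (zero_smul ℂ _)

lemma evalLinM_mapDomain {β : Q.V → ℕ} (M : QRep Q β) {x y x' y' : Q.V}
    (f : Quiver.Path x y → Quiver.Path x' y') (c : Quiver.Path x y →₀ ℂ) :
    evalLinM M x' y' (Finsupp.mapDomain f c) = c.sum fun p k => k • evalPath M (f p) := by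
  rw [evalLinM_eq_sum]
  exact Finsupp.sum_mapDomain_index (fun b => zero_smul ℂ _)
    (fun b m1 m2 => add_smul m1 m2 _)

lemma evalLin_of_mem_ideal {β : Q.V → ℕ} {M : QRep Q β} {S : Set (FormalRel Q)}
    (hM : M ∈ modSet S β) {x y : Q.V} {c : Quiver.Path x y →₀ ℂ}
    (hc : c ∈ idealComp S x y) : evalLinM M x y c = 0 := by
  have hle : idealComp S x y ≤ LinearMap.ker (evalLinM M x y) := by
    rw [idealComp, Submodule.span_le]
    rintro _ ⟨r, hr, p, q, rfl⟩
    simp only [SetLike.mem_coe, LinearMap.mem_ker]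
    rw [evalLinM_mapDomain]
    have h0 : evalLin M r.2.2 = 0 := hM r hr
    have hterm : ∀ (s : Quiver.Path r.1 r.2.1) (k : ℂ),
        k • evalPath M ((p.comp s).comp q)
          = evalPath M q * (k • evalPath M s) * evalPath M p := by
      intro s k
      rw [s8_evalPath_comp, s8_evalPath_comp, Matrix.mul_smul, Matrix.smul_mul,
        Matrix.mul_assoc]
    calc (r.2.2.sum fun s k => k • evalPath M ((p.comp s).comp q))
        = r.2.2.sum fun s k => evalPath M q * (k • evalPath M s) * evalPath M p :=
          Finsupp.sum_congr fun s _ => hterm s _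
      _ = evalPath M q * (r.2.2.sum fun s k => k • evalPath M s) * evalPath M p := by
          rw [Finsupp.sum, Finsupp.sum, ← Matrix.sum_mul, ← Matrix.mul_sum]
      _ = 0 := by
          rw [show (r.2.2.sum fun s k => k • evalPath M s) = evalLin M r.2.2 from rfl, h0,
            Matrix.mul_zero, Matrix.zero_mul]
  exact LinearMap.mem_ker.mp (hle hc)

/-- Helper: equality of matrices from equality of the induced linear maps. -/
lemma s8_matrix_eq {m n : ℕ} {A B : Matrix (Fin m) (Fin n) ℂ}
    (h : A.mulVecLin = B.mulVecLin) : A = B := by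
  apply Matrix.toLin'.injective
  rw [Matrix.toLin'_apply', Matrix.toLin'_apply', h]

lemma s8_mulVecLin_toMatrix' {m n : ℕ} (f : (Fin n → ℂ) →ₗ[ℂ] (Fin m → ℂ)) :
    (LinearMap.toMatrix' f).mulVecLin = f := by
  rw [← Matrix.toLin'_apply']
  exact Matrix.toLin'_toMatrix' f

/-- Left multiplication by a rectangular matrix, as a linear map. -/
def lmulM {m n p : ℕ} (A : Matrix (Fin m) (Fin n) ℂ) :
    Matrix (Fin n) (Fin p) ℂ →ₗ[ℂ] Matrix (Fin m) (Fin p) ℂ where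
  toFun X := A * X
  map_add' X Y := Matrix.mul_add A X Y
  map_smul' c X := Matrix.mul_smul A c X

/-- `mulVec` at a fixed vector, as a linear map in the matrix. -/
def mvAt {m n : ℕ} (v : Fin n → ℂ) :
    Matrix (Fin m) (Fin n) ℂ →ₗ[ℂ] (Fin m → ℂ) where
  toFun X := X.mulVec v
  map_add' X Y := Matrix.add_mulVec X Y v
  map_smul' c X := Matrix.smul_mulVec c X v

/-- The space `e_y·(ℂQ/⟨S⟩)·e_x`, realized as the span of the `W(p)` inside matrices. -/
def Lsub {βW : Q.V → ℕ} (W : QRep Q βW) (x y : Q.V) :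
    Submodule ℂ (Matrix (Fin (βW y)) (Fin (βW x)) ℂ) :=
  LinearMap.range (evalLinM W x y)

lemma one_mem_Lsub {βW : Q.V → ℕ} (W : QRep Q βW) (x : Q.V) :
    (1 : Matrix (Fin (βW x)) (Fin (βW x)) ℂ) ∈ Lsub W x x :=
  ⟨Finsupp.single Quiver.Path.nil 1, by rw [evalLinM_single, s8_evalPath_nil, one_smul]⟩

lemma lsub_mul_mem {βW : Q.V → ℕ} (W : QRep Q βW) (a : Q.A) {x : Q.V}
    {m : Matrix (Fin (βW (Q.t a))) (Fin (βW x)) ℂ}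
    (hm : m ∈ Lsub W x (Q.t a)) : W a * m ∈ Lsub W x (Q.h a) := by
  obtain ⟨c, rfl⟩ := hm
  refine ⟨Finsupp.mapDomain (fun p => p.cons (⟨a, rfl, rfl⟩ : Q.t a ⟶ Q.h a)) c, ?_⟩
  rw [evalLinM_mapDomain, evalLinM_eq_sum]
  rw [Finsupp.sum, Finsupp.sum, Matrix.mul_sum]
  exact Finset.sum_congr rfl fun p _ => by rw [s8_evalPath_cons, Matrix.mul_smul]

lemma lsub_path_mem {βW : Q.V → ℕ} (W : QRep Q βW) {x y z : Q.V} (p : Quiver.Path y z)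
    {m : Matrix (Fin (βW y)) (Fin (βW x)) ℂ}
    (hm : m ∈ Lsub W x y) : evalPath W p * m ∈ Lsub W x z := by
  obtain ⟨c, rfl⟩ := hm
  refine ⟨Finsupp.mapDomain (fun s => s.comp p) c, ?_⟩
  rw [evalLinM_mapDomain, evalLinM_eq_sum]
  rw [Finsupp.sum, Finsupp.sum, Matrix.mul_sum]
  exact Finset.sum_congr rfl fun s _ => by rw [s8_evalPath_comp, Matrix.mul_smul]

/-- The index type of the generators. -/
abbrev Gen (Q : Quiv) (κ : Q.V → ℕ) := Σ x : Q.V, Fin (κ x)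

/-- The abstract free module `⊕_{x} (Ae_x)^{κ(x)}`, realized inside powers of `W`. -/
abbrev MabsF {βW : Q.V → ℕ} (W : QRep Q βW) (κ : Q.V → ℕ) (y : Q.V) :=
  ∀ i : Gen Q κ, ↥(Lsub W i.1 y)

def leftMulArrow {βW : Q.V → ℕ} (W : QRep Q βW) (a : Q.A) (x : Q.V) :
    ↥(Lsub W x (Q.t a)) →ₗ[ℂ] ↥(Lsub W x (Q.h a)) :=
  LinearMap.codRestrict _ ((lmulM (W a)) ∘ₗ (Lsub W x (Q.t a)).subtype)
    (fun m => lsub_mul_mem W a m.2)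

def leftMulPath {βW : Q.V → ℕ} (W : QRep Q βW) (x : Q.V) {y z : Q.V} (p : Quiver.Path y z) :
    ↥(Lsub W x y) →ₗ[ℂ] ↥(Lsub W x z) :=
  LinearMap.codRestrict _ ((lmulM (evalPath W p)) ∘ₗ (Lsub W x y).subtype)
    (fun m => lsub_path_mem W p m.2)

def BabsF {βW : Q.V → ℕ} (W : QRep Q βW) (κ : Q.V → ℕ) (a : Q.A) :
    MabsF W κ (Q.t a) →ₗ[ℂ] MabsF W κ (Q.h a) :=
  LinearMap.pi fun i => (leftMulArrow W a i.1) ∘ₗ LinearMap.proj i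

def pathActF {βW : Q.V → ℕ} (W : QRep Q βW) (κ : Q.V → ℕ) {x y : Q.V} (p : Quiver.Path x y) :
    MabsF W κ x →ₗ[ℂ] MabsF W κ y :=
  LinearMap.pi fun i => (leftMulPath W i.1 p) ∘ₗ LinearMap.proj i

def phiF {βW : Q.V → ℕ} (W : QRep Q βW) (κ : Q.V → ℕ) (y : Q.V) : ℕ :=
  Module.finrank ℂ (MabsF W κ y)

def eF {βW : Q.V → ℕ} (W : QRep Q βW) (κ : Q.V → ℕ) (y : Q.V) :
    MabsF W κ y ≃ₗ[ℂ] (Fin (phiF W κ y) → ℂ) :=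
  (Module.finBasis ℂ (MabsF W κ y)).equivFun

/-- The free module as a matrix representation. -/
def Frep {βW : Q.V → ℕ} (W : QRep Q βW) (κ : Q.V → ℕ) : QRep Q (phiF W κ) := fun a =>
  LinearMap.toMatrix' ((eF W κ (Q.h a)).toLinearMap ∘ₗ BabsF W κ a ∘ₗ
    (eF W κ (Q.t a)).symm.toLinearMap)

lemma mulVecLin_Frep {βW : Q.V → ℕ} (W : QRep Q βW) (κ : Q.V → ℕ) (a : Q.A) :
    (Frep W κ a).mulVecLin = (eF W κ (Q.h a)).toLinearMap ∘ₗ BabsF W κ a ∘ₗ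
      (eF W κ (Q.t a)).symm.toLinearMap :=
  s8_mulVecLin_toMatrix' _

lemma pathActF_apply {βW : Q.V → ℕ} (W : QRep Q βW) (κ : Q.V → ℕ) {x y : Q.V}
    (p : Quiver.Path x y) (m : MabsF W κ x) (i : Gen Q κ) :
    (pathActF W κ p m i : Matrix (Fin (βW y)) (Fin (βW i.1)) ℂ)
      = evalPath W p * (m i : Matrix (Fin (βW x)) (Fin (βW i.1)) ℂ) := rfl

lemma BabsF_apply {βW : Q.V → ℕ} (W : QRep Q βW) (κ : Q.V → ℕ) (a : Q.A)
    (m : MabsF W κ (Q.t a)) (i : Gen Q κ) :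
    (BabsF W κ a m i : Matrix (Fin (βW (Q.h a))) (Fin (βW i.1)) ℂ)
      = W a * (m i : Matrix (Fin (βW (Q.t a))) (Fin (βW i.1)) ℂ) := rfl

lemma mulVecLin_evalPath_Frep {βW : Q.V → ℕ} (W : QRep Q βW) (κ : Q.V → ℕ) {x y : Q.V}
    (p : Quiver.Path x y) :
    (evalPath (Frep W κ) p).mulVecLin
      = (eF W κ y).toLinearMap ∘ₗ pathActF W κ p ∘ₗ (eF W κ x).symm.toLinearMap := by
  induction p with
  | nil =>
      rw [s8_evalPath_nil, Matrix.mulVecLin_one]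
      have hp : pathActF W κ (Quiver.Path.nil : Quiver.Path x x) = LinearMap.id := by
        refine LinearMap.ext fun m => funext fun i => Subtype.ext ?_
        rw [pathActF_apply, s8_evalPath_nil, Matrix.one_mul]
        rfl
      rw [hp]
      refine LinearMap.ext fun v => ?_
      simp
  | cons p e ih =>
      obtain ⟨a, rfl, rfl⟩ := e
      rw [s8_evalPath_cons, Matrix.mulVecLin_mul, mulVecLin_Frep, ih]
      have hcomp : BabsF W κ a ∘ₗ pathActF W κ p
          = pathActF W κ (p.cons (⟨a, rfl, rfl⟩ : Q.t a ⟶ Q.h a)) := by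
        refine LinearMap.ext fun m => funext fun i => Subtype.ext ?_
        rw [LinearMap.comp_apply, BabsF_apply, pathActF_apply, pathActF_apply,
          s8_evalPath_cons, Matrix.mul_assoc]
      rw [← hcomp]
      refine LinearMap.ext fun v => ?_
      simp

lemma pathActF_sum_apply {βW : Q.V → ℕ} (W : QRep Q βW) (κ : Q.V → ℕ) {x y : Q.V}
    (c : Quiver.Path x y →₀ ℂ) (m : MabsF W κ x) (i : Gen Q κ) :
    ((c.sum fun p k => k • (pathActF W κ p m)) i : Matrix (Fin (βW y)) (Fin (βW i.1)) ℂ)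
      = evalLinM W x y c * (m i : Matrix (Fin (βW x)) (Fin (βW i.1)) ℂ) := by
  rw [Finsupp.sum, Finset.sum_apply, Submodule.coe_sum]
  rw [evalLinM_eq_sum, Finsupp.sum, Matrix.sum_mul]
  refine Finset.sum_congr rfl fun p _ => ?_
  rw [Pi.smul_apply, SetLike.val_smul, pathActF_apply, Matrix.smul_mul]

lemma Frep_modSet {βW : Q.V → ℕ} (W : QRep Q βW) (κ : Q.V → ℕ) {S : Set (FormalRel Q)}
    (hWS : W ∈ modSet S βW) : Frep W κ ∈ modSet S (phiF W κ) := by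
  intro r hr
  have h0 : evalLinM W r.1 r.2.1 r.2.2 = 0 := by rw [evalLinM_apply]; exact hWS r hr
  show evalLin (Frep W κ) r.2.2 = 0
  rw [← evalLinM_apply]
  apply s8_matrix_eq
  rw [Matrix.mulVecLin_zero]
  refine LinearMap.ext fun v => ?_
  rw [evalLinM_eq_sum]
  have h2 : (r.2.2.sum fun p k => k • evalPath (Frep W κ) p).mulVecLin v
      = r.2.2.sum fun p k => (k • evalPath (Frep W κ) p).mulVecLin v := by
    rw [Finsupp.sum, Finsupp.sum]
    rw [show (∑ p ∈ r.2.2.support, r.2.2 p • evalPath (Frep W κ) p).mulVecLin v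
        = mvAt v (∑ p ∈ r.2.2.support, r.2.2 p • evalPath (Frep W κ) p) from rfl]
    rw [map_sum]
    rfl
  rw [h2]
  have hterm : ∀ (p : Quiver.Path r.1 r.2.1) (k : ℂ),
      (k • evalPath (Frep W κ) p).mulVecLin v
        = (eF W κ r.2.1) (k • pathActF W κ p ((eF W κ r.1).symm v)) := by
    intro p k
    rw [Matrix.mulVecLin_apply, Matrix.smul_mulVec, _root_.map_smul, ← Matrix.mulVecLin_apply,
      LinearMap.congr_fun (mulVecLin_evalPath_Frep W κ p) v]
    rfl
  have hsum := Finsupp.sum_congr (f := r.2.2)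
    (g1 := fun p k => (k • evalPath (Frep W κ) p).mulVecLin v)
    (g2 := fun p k => (eF W κ r.2.1) (k • pathActF W κ p ((eF W κ r.1).symm v)))
    (fun p _ => hterm p _)
  rw [hsum, ← map_finsuppSum]
  have h3 : (r.2.2.sum fun p k => k • pathActF W κ p ((eF W κ r.1).symm v)) = 0 := by
    funext i
    refine Subtype.ext ?_
    rw [pathActF_sum_apply, h0, Matrix.zero_mul]
    rfl
  rw [h3, map_zero]
  simp

/-- Lifting a matrix in `Lsub W x y` to its action on another module `M`
(well-defined by faithfulness of `W`). -/
def liftL {βW β' : Q.V → ℕ} (W : QRep Q βW) (M : QRep Q β') (x y : Q.V)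
    (hker : LinearMap.ker (evalLinM W x y) ≤ LinearMap.ker (evalLinM M x y)) :
    ↥(Lsub W x y) →ₗ[ℂ] Matrix (Fin (β' y)) (Fin (β' x)) ℂ :=
  (Submodule.liftQ _ (evalLinM M x y) hker) ∘ₗ
    ((LinearMap.quotKerEquivRange (evalLinM W x y)).symm.toLinearMap)

lemma liftL_applyM {βW β' : Q.V → ℕ} (W : QRep Q βW) (M : QRep Q β') (x y : Q.V)
    (hker : LinearMap.ker (evalLinM W x y) ≤ LinearMap.ker (evalLinM M x y))
    (m : ↥(Lsub W x y)) (c : Quiver.Path x y →₀ ℂ)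
    (hc : evalLinM W x y c = (m : Matrix (Fin (βW y)) (Fin (βW x)) ℂ)) :
    liftL W M x y hker m = evalLinM M x y c := by
  have h1 : (LinearMap.quotKerEquivRange (evalLinM W x y)).symm m
      = Submodule.Quotient.mk c := by
    refine (LinearEquiv.symm_apply_eq _).mpr ?_
    exact Subtype.ext ((LinearMap.quotKerEquivRange_apply_mk _ c).trans hc).symm
  show (Submodule.liftQ _ (evalLinM M x y) hker)
      ((LinearMap.quotKerEquivRange (evalLinM W x y)).symm m) = _
  rw [h1, Submodule.liftQ_apply]

lemma liftL_one {βW β' : Q.V → ℕ} (W : QRep Q βW) (M : QRep Q β') (x : Q.V)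
    (hker : LinearMap.ker (evalLinM W x x) ≤ LinearMap.ker (evalLinM M x x)) :
    liftL W M x x hker ⟨1, one_mem_Lsub W x⟩ = 1 := by
  rw [liftL_applyM W M x x hker ⟨1, one_mem_Lsub W x⟩ (Finsupp.single Quiver.Path.nil 1)
    (by rw [evalLinM_single, s8_evalPath_nil, one_smul])]
  rw [evalLinM_single, s8_evalPath_nil, one_smul]

lemma liftL_mul {βW β' : Q.V → ℕ} (W : QRep Q βW) (M : QRep Q β') (a : Q.A) (x : Q.V)
    (hker1 : LinearMap.ker (evalLinM W x (Q.t a)) ≤ LinearMap.ker (evalLinM M x (Q.t a)))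
    (hker2 : LinearMap.ker (evalLinM W x (Q.h a)) ≤ LinearMap.ker (evalLinM M x (Q.h a)))
    (m : ↥(Lsub W x (Q.t a))) :
    liftL W M x (Q.h a) hker2
      ⟨W a * (m : Matrix (Fin (βW (Q.t a))) (Fin (βW x)) ℂ), lsub_mul_mem W a m.2⟩
      = M a * liftL W M x (Q.t a) hker1 m := by
  have hcons : ∀ {β'' : Q.V → ℕ} (N : QRep Q β'') (c : Quiver.Path x (Q.t a) →₀ ℂ),
      evalLinM N x (Q.h a) (Finsupp.mapDomain
        (fun p => p.cons (⟨a, rfl, rfl⟩ : Q.t a ⟶ Q.h a)) c)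
      = N a * evalLinM N x (Q.t a) c := by
    intro β'' N c
    rw [evalLinM_mapDomain, evalLinM_eq_sum, Finsupp.sum, Finsupp.sum, Matrix.mul_sum]
    exact Finset.sum_congr rfl fun p _ => by
      rw [s8_evalPath_cons, Matrix.mul_smul]
  obtain ⟨c, hc⟩ := m.2
  rw [liftL_applyM W M x (Q.h a) hker2 _
    (Finsupp.mapDomain (fun p => p.cons (⟨a, rfl, rfl⟩ : Q.t a ⟶ Q.h a)) c)
    (by rw [hcons W c, hc])]
  rw [liftL_applyM W M x (Q.t a) hker1 m c hc]
  exact hcons M c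

variable {βW : Q.V → ℕ}

/-- The abstract morphism from the free module to a module `M`, sending the generator
`(x,k)` to the `k`-th basis vector of `M(x)`. -/
def gabsF (W : QRep Q βW) {κ : Q.V → ℕ} (M : QRep Q κ)
    (hker : ∀ x y, LinearMap.ker (evalLinM W x y) ≤ LinearMap.ker (evalLinM M x y))
    (y : Q.V) : MabsF W κ y →ₗ[ℂ] (Fin (κ y) → ℂ) :=
  ∑ i : Gen Q κ, (mvAt (Pi.single i.2 1)) ∘ₗ (liftL W M i.1 y (hker i.1 y)) ∘ₗ
    LinearMap.proj i

/-- The matrix form of `gabsF`. -/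
def gmatF (W : QRep Q βW) {κ : Q.V → ℕ} (M : QRep Q κ)
    (hker : ∀ x y, LinearMap.ker (evalLinM W x y) ≤ LinearMap.ker (evalLinM M x y))
    (y : Q.V) : Matrix (Fin (κ y)) (Fin (phiF W κ y)) ℂ :=
  LinearMap.toMatrix' (gabsF W M hker y ∘ₗ (eF W κ y).symm.toLinearMap)

lemma gabsF_comm (W : QRep Q βW) {κ : Q.V → ℕ} (M : QRep Q κ)
    (hker : ∀ x y, LinearMap.ker (evalLinM W x y) ≤ LinearMap.ker (evalLinM M x y))
    (a : Q.A) :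
    gabsF W M hker (Q.h a) ∘ₗ BabsF W κ a = (M a).mulVecLin ∘ₗ gabsF W M hker (Q.t a) := by
  refine LinearMap.ext fun m => ?_
  rw [LinearMap.comp_apply, LinearMap.comp_apply, gabsF, gabsF,
    LinearMap.sum_apply, LinearMap.sum_apply, map_sum]
  refine Finset.sum_congr rfl fun i _ => ?_
  rw [LinearMap.comp_apply, LinearMap.comp_apply, LinearMap.comp_apply, LinearMap.comp_apply]
  rw [show (LinearMap.proj i : MabsF W κ (Q.h a) →ₗ[ℂ] _) (BabsF W κ a m)
      = ⟨W a * ((m i : Matrix _ _ ℂ)), lsub_mul_mem W a (m i).2⟩ from rfl]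
  rw [liftL_mul W M a i.1 (hker i.1 (Q.t a)) (hker i.1 (Q.h a)) (m i)]
  rw [show (LinearMap.proj i : MabsF W κ (Q.t a) →ₗ[ℂ] _) m = m i from rfl]
  rw [show mvAt (Pi.single i.2 1) (M a * liftL W M i.1 (Q.t a) (hker i.1 (Q.t a)) (m i))
      = (M a * liftL W M i.1 (Q.t a) (hker i.1 (Q.t a)) (m i)).mulVec (Pi.single i.2 1)
    from rfl]
  rw [← Matrix.mulVec_mulVec]
  rfl

lemma gmatF_hom (W : QRep Q βW) {κ : Q.V → ℕ} (M : QRep Q κ)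
    (hker : ∀ x y, LinearMap.ker (evalLinM W x y) ≤ LinearMap.ker (evalLinM M x y)) :
    gmatF W M hker ∈ HomS (Frep W κ) M := by
  intro a
  apply s8_matrix_eq
  rw [Matrix.mulVecLin_mul, Matrix.mulVecLin_mul, gmatF, gmatF, s8_mulVecLin_toMatrix',
    s8_mulVecLin_toMatrix', mulVecLin_Frep]
  refine LinearMap.ext fun v => ?_
  have := LinearMap.congr_fun (gabsF_comm W M hker a) ((eF W κ (Q.t a)).symm v)
  simp only [LinearMap.comp_apply, LinearEquiv.coe_coe, LinearEquiv.symm_apply_apply] at this ⊢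
  exact this

lemma gmatF_surj (W : QRep Q βW) {κ : Q.V → ℕ} (M : QRep Q κ)
    (hker : ∀ x y, LinearMap.ker (evalLinM W x y) ≤ LinearMap.ker (evalLinM M x y)) :
    MorSurj (gmatF W M hker) := by
  intro y
  rw [show (gmatF W M hker y).mulVecLin
      = gabsF W M hker y ∘ₗ (eF W κ y).symm.toLinearMap from s8_mulVecLin_toMatrix' _]
  have hg : Function.Surjective (gabsF W M hker y) := by
    have hsingle : ∀ k : Fin (κ y), Pi.single k (1:ℂ) ∈ LinearMap.range (gabsF W M hker y) := by
      intro k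
      refine ⟨Pi.single (⟨y, k⟩ : Gen Q κ) ⟨1, one_mem_Lsub W y⟩, ?_⟩
      rw [gabsF, LinearMap.sum_apply]
      rw [Finset.sum_eq_single (⟨y, k⟩ : Gen Q κ)]
      · rw [LinearMap.comp_apply, LinearMap.comp_apply]
        rw [show (LinearMap.proj (⟨y, k⟩ : Gen Q κ) : MabsF W κ y →ₗ[ℂ] _)
              (Pi.single (⟨y, k⟩ : Gen Q κ) ⟨1, one_mem_Lsub W y⟩)
            = ⟨1, one_mem_Lsub W y⟩ from Pi.single_eq_same _ _]
        rw [liftL_one]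
        show (1 : Matrix _ _ ℂ).mulVec (Pi.single k 1) = Pi.single k 1
        rw [Matrix.one_mulVec]
      · intro i _ hne
        rw [LinearMap.comp_apply, LinearMap.comp_apply]
        rw [show (LinearMap.proj i : MabsF W κ y →ₗ[ℂ] _)
              (Pi.single (⟨y, k⟩ : Gen Q κ) ⟨1, one_mem_Lsub W y⟩) = 0 from
          Pi.single_eq_of_ne hne _]
        rw [map_zero, map_zero]
      · intro h; exact absurd (Finset.mem_univ _) h
    rw [← LinearMap.range_eq_top, eq_top_iff]
    intro v _
    rw [pi_eq_sum_univ v]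
    refine Submodule.sum_mem _ fun k _ => Submodule.smul_mem _ _ ?_
    have : (fun j => if k = j then (1:ℂ) else 0) = Pi.single k 1 := by
      funext j
      rw [Pi.single_apply]
      by_cases h : k = j
      · subst h; simp
      · rw [if_neg h, if_neg (Ne.symm h)]
    rw [this]
    exact hsingle k
  rw [LinearMap.coe_comp]
  exact hg.comp (LinearEquiv.surjective _)

/-- The projections of the free module onto copies of `W`. -/
def psiAbs (W : QRep Q βW) (κ : Q.V → ℕ) (i : Gen Q κ) (cc : Fin (βW i.1)) (y : Q.V) :
    MabsF W κ y →ₗ[ℂ] (Fin (βW y) → ℂ) :=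
  mvAt (Pi.single cc 1) ∘ₗ (Lsub W i.1 y).subtype ∘ₗ LinearMap.proj i

def psiMat (W : QRep Q βW) (κ : Q.V → ℕ) (i : Gen Q κ) (cc : Fin (βW i.1)) (y : Q.V) :
    Matrix (Fin (βW y)) (Fin (phiF W κ y)) ℂ :=
  LinearMap.toMatrix' (psiAbs W κ i cc y ∘ₗ (eF W κ y).symm.toLinearMap)

lemma psiMat_hom (W : QRep Q βW) (κ : Q.V → ℕ) (i : Gen Q κ) (cc : Fin (βW i.1)) :
    psiMat W κ i cc ∈ HomS (Frep W κ) W := by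
  intro a
  apply s8_matrix_eq
  rw [Matrix.mulVecLin_mul, Matrix.mulVecLin_mul, psiMat, psiMat, s8_mulVecLin_toMatrix',
    s8_mulVecLin_toMatrix', mulVecLin_Frep]
  refine LinearMap.ext fun v => ?_
  simp only [LinearMap.comp_apply, LinearEquiv.coe_coe, LinearEquiv.symm_apply_apply]
  show psiAbs W κ i cc (Q.h a) (BabsF W κ a ((eF W κ (Q.t a)).symm v))
    = (W a).mulVecLin (psiAbs W κ i cc (Q.t a) ((eF W κ (Q.t a)).symm v))
  set m := (eF W κ (Q.t a)).symm v with hmdef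
  show (W a * (m i : Matrix (Fin (βW (Q.t a))) (Fin (βW i.1)) ℂ)).mulVec (Pi.single cc 1)
    = (W a).mulVec ((m i : Matrix (Fin (βW (Q.t a))) (Fin (βW i.1)) ℂ).mulVec (Pi.single cc 1))
  rw [Matrix.mulVec_mulVec]

lemma psiMat_sep (W : QRep Q βW) (κ : Q.V → ℕ) (y : Q.V) (v : Fin (phiF W κ y) → ℂ)
    (hv : ∀ (i : Gen Q κ) (cc : Fin (βW i.1)), (psiMat W κ i cc y).mulVec v = 0) :
    v = 0 := by
  have hm : (eF W κ y).symm v = 0 := by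
    funext i
    refine Subtype.ext (Matrix.ext fun r cc => ?_)
    have h1 := congrFun (hv i cc) r
    rw [show (psiMat W κ i cc y).mulVec v
        = psiAbs W κ i cc y ((eF W κ y).symm v) from
      LinearMap.congr_fun (s8_mulVecLin_toMatrix' (psiAbs W κ i cc y ∘ₗ
        (eF W κ y).symm.toLinearMap)) v] at h1
    rw [show psiAbs W κ i cc y ((eF W κ y).symm v)
        = (((eF W κ y).symm v i : Matrix _ _ ℂ)).mulVec (Pi.single cc 1) from rfl] at h1
    rw [Matrix.mulVec] at h1
    simp only [dotProduct, Pi.single_apply, mul_ite, mul_one, mul_zero,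
      Finset.sum_ite_eq', Finset.mem_univ, if_true] at h1
    exact h1
  have := congrArg (eF W κ y) hm
  rw [LinearEquiv.apply_symm_apply, map_zero] at this
  exact this

end Statement8Aux

/-- Let `A = ℂQ/⟨R⟩` be a connected acyclic bound quiver algebra, `W` a
faithful `A`-module, and `V` an `A`-module with a minimal projective resolution
`⋯ → P₂ →^{d₁} P₁ →^{d₀} P₀ →^{ε} V → 0`.  If the induced map
`Hom_A(P₀,W) → Hom_A(P₁,W)`, `φ ↦ φ ∘ d₀`, is an isomorphism of vector spaces, then
`pdim_A V ≤ 1`. -/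
theorem statement8 (Q : Quiv) [Fintype Q.A] (hconn : QConnected Q) (hacyc : QAcyclic Q)
    (R : Set (FormalRel Q)) (hRfin : R.Finite) (hRadm : AdmissibleRels R)
    (βW βV : Q.V → ℕ) (W : QRep Q βW) (hW : W ∈ modSet R βW)
    (hfaith : FaithfulOver R W)
    (V : QRep Q βV) (hV : V ∈ modSet R βV)
    -- a projective resolution `⋯ → P₂ → P₁ → P₀ → V → 0` ...
    (γ : ℕ → (Q.V → ℕ)) (P : ∀ n, QRep Q (γ n))
    (hPmod : ∀ n, P n ∈ modSet R (γ n))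
    (hPproj : ∀ n, IsProjRep R (P n))
    (d : ∀ n, ∀ x : Q.V, Matrix (Fin (γ n x)) (Fin (γ (n+1) x)) ℂ)
    (hd : ∀ n, d n ∈ HomS (P (n+1)) (P n))
    (ε : ∀ x : Q.V, Matrix (Fin (βV x)) (Fin (γ 0 x)) ℂ)
    (hε : ε ∈ HomS (P 0) V)
    (hsurj : MorSurj ε)
    (hexact0 : ∀ x, LinearMap.range (Matrix.mulVecLin (d 0 x)) =
      LinearMap.ker (Matrix.mulVecLin (ε x)))
    (hexact : ∀ n x, LinearMap.range (Matrix.mulVecLin (d (n+1) x)) =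
      LinearMap.ker (Matrix.mulVecLin (d n x)))
    -- ... which is minimal:
    (hmin0 : IsEssentialTo (P 0) ε)
    (hminn : ∀ n, IsEssentialTo (P (n+1)) (d n))
    -- hypothesis: `Hom(P₀,W) → Hom(P₁,W)`, `φ ↦ φ ∘ d₀`, is an isomorphism:
    (hiso : Function.Bijective (precompMap (P 1) (P 0) W (d 0) (hd 0))) :
    PdimLE1 R V := by
  classical
  -- kernel inclusion from faithfulness
  have hker : ∀ x y : Q.V,
      LinearMap.ker (evalLinM W x y) ≤ LinearMap.ker (evalLinM (P 1) x y) := by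
    intro x y c hc
    rw [LinearMap.mem_ker] at hc ⊢
    have hideal : c ∈ idealComp R x y := by
      apply hfaith
      rw [← evalLinM_apply]
      exact hc
    exact evalLin_of_mem_ideal (hPmod 1) hideal
  set κ : Q.V → ℕ := γ 1 with hκ
  -- the free module and its surjection onto P 1
  have hFmod : Frep W κ ∈ modSet R (phiF W κ) := Frep_modSet W κ hW
  have hghom : gmatF W (P 1) hker ∈ HomS (Frep W κ) (P 1) := gmatF_hom W (P 1) hker
  have hgsurj : MorSurj (gmatF W (P 1) hker) := gmatF_surj W (P 1) hker
  -- identity is a morphism P 1 → P 1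
  have hid : (fun x : Q.V => (1 : Matrix (Fin (γ 1 x)) (Fin (γ 1 x)) ℂ)) ∈
      HomS (P 1) (P 1) := by
    intro a
    rw [Matrix.one_mul, Matrix.mul_one]
  -- lift the identity through g : F → P 1 by projectivity of P 1
  obtain ⟨hm, hmhom, hgh⟩ := hPproj 1 (phiF W κ) (γ 1) (Frep W κ) (P 1) hFmod (hPmod 1)
    (gmatF W (P 1) hker) hghom hgsurj (fun x : Q.V => 1) hid
  -- every morphism P 1 → W kills d 1
  have hkill : ∀ ψ ∈ HomS (P 1) W, ∀ y : Q.V, ψ y * d 1 y = 0 := by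
    intro ψ hψ y
    obtain ⟨Φ, hΦ⟩ := hiso.2 ⟨ψ, hψ⟩
    have hΦψ : ∀ z : Q.V, Φ.1 z * d 0 z = ψ z := by
      intro z
      exact congrFun (congrArg Subtype.val hΦ) z
    have hdd : d 0 y * d 1 y = 0 := by
      apply s8_matrix_eq
      rw [Matrix.mulVecLin_zero]
      refine LinearMap.ext fun v => ?_
      rw [Matrix.mulVecLin_apply, ← Matrix.mulVec_mulVec]
      have hmem : (d 1 y).mulVec v ∈ LinearMap.ker (Matrix.mulVecLin (d 0 y)) := by
        rw [← hexact 0 y]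
        exact ⟨v, rfl⟩
      rw [LinearMap.mem_ker, Matrix.mulVecLin_apply] at hmem
      rw [hmem]
      rfl
    calc ψ y * d 1 y = (Φ.1 y * d 0 y) * d 1 y := by rw [hΦψ y]
      _ = Φ.1 y * (d 0 y * d 1 y) := Matrix.mul_assoc _ _ _
      _ = 0 := by rw [hdd, Matrix.mul_zero]
  -- compositions ψ ∘ h : P 1 → W are morphisms
  have hcomp : ∀ (i : Gen Q κ) (cc : Fin (βW i.1)),
      (fun y : Q.V => psiMat W κ i cc y * hm y) ∈ HomS (P 1) W := by
    intro i cc a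
    have h1 : hm (Q.h a) * P 1 a = Frep W κ a * hm (Q.t a) := hmhom a
    have h2 : psiMat W κ i cc (Q.h a) * Frep W κ a
        = W a * psiMat W κ i cc (Q.t a) := psiMat_hom W κ i cc a
    calc psiMat W κ i cc (Q.h a) * hm (Q.h a) * P 1 a
        = psiMat W κ i cc (Q.h a) * (hm (Q.h a) * P 1 a) := Matrix.mul_assoc _ _ _
      _ = psiMat W κ i cc (Q.h a) * (Frep W κ a * hm (Q.t a)) := by rw [h1]
      _ = psiMat W κ i cc (Q.h a) * Frep W κ a * hm (Q.t a) := (Matrix.mul_assoc _ _ _).symm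
      _ = W a * psiMat W κ i cc (Q.t a) * hm (Q.t a) := by rw [h2]
      _ = W a * (psiMat W κ i cc (Q.t a) * hm (Q.t a)) := Matrix.mul_assoc _ _ _
  -- conclude d 1 = 0 at every vertex
  have hd1 : ∀ (y : Q.V) (v : Fin (γ 2 y) → ℂ), (d 1 y).mulVec v = 0 := by
    intro y v
    have hsep : ∀ (i : Gen Q κ) (cc : Fin (βW i.1)),
        (psiMat W κ i cc y).mulVec ((hm y).mulVec ((d 1 y).mulVec v)) = 0 := by
      intro i cc
      have h1 : (psiMat W κ i cc y * hm y) * d 1 y = 0 :=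
        hkill _ (hcomp i cc) y
      have h3 : ((psiMat W κ i cc y * hm y) * d 1 y).mulVec v = 0 := by
        rw [h1, Matrix.zero_mulVec]
      rw [← Matrix.mulVec_mulVec, ← Matrix.mulVec_mulVec] at h3
      exact h3
    have hzero : (hm y).mulVec ((d 1 y).mulVec v) = 0 := psiMat_sep W κ y _ hsep
    have hghy : gmatF W (P 1) hker y * hm y = 1 := hgh y
    calc (d 1 y).mulVec v
        = (1 : Matrix _ _ ℂ).mulVec ((d 1 y).mulVec v) := (Matrix.one_mulVec _).symm
      _ = (gmatF W (P 1) hker y * hm y).mulVec ((d 1 y).mulVec v) := by rw [hghy]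
      _ = (gmatF W (P 1) hker y).mulVec ((hm y).mulVec ((d 1 y).mulVec v)) :=
          (Matrix.mulVec_mulVec _ _ _).symm
      _ = 0 := by rw [hzero, Matrix.mulVec_zero]
  -- hence d 0 is injective at every vertex
  have hinj : MorInj (d 0) := by
    intro x
    rw [← LinearMap.ker_eq_bot (f := Matrix.mulVecLin (d 0 x))]
    rw [← hexact 0 x]
    rw [LinearMap.range_eq_bot]
    refine LinearMap.ext fun v => ?_
    rw [Matrix.mulVecLin_apply, hd1 x v]
    rfl
  exact ⟨γ 0, γ 1, P 0, P 1, hPmod 0, hPmod 1, hPproj 0, hPproj 1, d 0, hd 0, ε, hε,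
    hinj, hsurj, hexact0⟩
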